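/- The point 0 ∈ ℝ^d is a global minimizer of f if and only if ‖S(z, tλ)‖₂ ≤ tμ. -/

import Mathlib

open Finset
open scoped RealInnerProductSpace

lemma soft_abs (a c : ℝ) (hc : 0 ≤ c) :
    |Real.sign a * max (|a| - c) 0| = max (|a| - c) 0 := by
  rcases lt_trichotomy a 0 with h | h | h
  · rw [Real.sign_of_neg h, abs_mul, abs_neg, abs_one, one_mul,
      abs_of_nonneg (le_max_right _ _)]
  · simp [h, max_eq_right (by linarith : (0:ℝ) - c ≤ 0)]
    linarith
  · rw [Real.sign_of_pos h, one_mul, abs_of_nonneg (le_max_right _ _)]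

lemma soft_mul (a c : ℝ) (hc : 0 ≤ c) :
    (Real.sign a * max (|a| - c) 0) * a =
      (Real.sign a * max (|a| - c) 0) ^ 2 + c * |Real.sign a * max (|a| - c) 0| := by
  rw [soft_abs a c hc]
  rcases lt_trichotomy a 0 with h | h | h
  · rw [Real.sign_of_neg h, abs_of_neg h]
    rcases le_or_gt (-a) c with h2 | h2
    · rw [max_eq_right (by linarith)]; ring
    · rw [max_eq_left (by linarith)]; ring
  · simp [h, max_eq_right (by linarith : (0:ℝ) - c ≤ 0)]
    right; exact hc
  · rw [Real.sign_of_pos h, abs_of_pos h]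
    rcases le_or_gt a c with h2 | h2
    · rw [max_eq_right (by linarith)]; ring
    · rw [max_eq_left (by linarith)]; ring

lemma soft_residual (a c : ℝ) (hc : 0 ≤ c) :
    |a - Real.sign a * max (|a| - c) 0| ≤ c := by
  rcases lt_trichotomy a 0 with h | h | h
  · rw [Real.sign_of_neg h, abs_of_neg h]
    rcases le_or_gt (-a) c with h2 | h2
    · rw [max_eq_right (by linarith)]
      simp only [mul_zero, sub_zero]
      rw [abs_of_neg h]; linarith
    · rw [max_eq_left (by linarith)]
      rw [show a - -1 * (-a - c) = -c by ring, abs_neg, abs_of_nonneg hc]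
  · simp [h, max_eq_right (by linarith : (0:ℝ) - c ≤ 0), hc]
  · rw [Real.sign_of_pos h, abs_of_pos h, one_mul]
    rcases le_or_gt a c with h2 | h2
    · rw [max_eq_right (by linarith), sub_zero, abs_of_pos h]; linarith
    · rw [max_eq_left (by linarith), show a - (a - c) = c by ring, abs_of_nonneg hc]


lemma aux_div_le (t A B C D : ℝ) (ht : 0 < t) (h : A + 2*t*B ≤ C + 2*t*D) :
    1/(2*t)*A + B ≤ 1/(2*t)*C + D := by
  have h2t : (0:ℝ) < 2*t := by linarith
  rw [div_mul_eq_mul_div, div_mul_eq_mul_div, one_mul, one_mul, ← sub_nonneg]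
  have e : C/(2*t) + D - (A/(2*t) + B) = ((C + 2*t*D) - (A + 2*t*B))/(2*t) := by
    field_simp
  rw [e]
  exact div_nonneg (by linarith) h2t.le

lemma aux_div_lt (t A B C D : ℝ) (ht : 0 < t) (h : A + 2*t*B < C + 2*t*D) :
    1/(2*t)*A + B < 1/(2*t)*C + D := by
  have h2t : (0:ℝ) < 2*t := by linarith
  rw [div_mul_eq_mul_div, div_mul_eq_mul_div, one_mul, one_mul, ← sub_pos]
  have e : C/(2*t) + D - (A/(2*t) + B) = ((C + 2*t*D) - (A + 2*t*B))/(2*t) := by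
    field_simp
  rw [e]
  exact div_pos (by linarith) h2t

/-- `0` globally minimizes
`f(β) = (1/(2t))‖β − z‖₂² + λ‖β‖₁ + μ‖β‖₂` iff `‖S(z, tλ)‖₂ ≤ tμ`,
where `S(·,·)` is componentwise soft-thresholding. -/
theorem zero_minimizer_iff_soft_threshold_small
    (d : ℕ) (z : EuclideanSpace ℝ (Fin d)) (t lam mu : ℝ)
    (ht : 0 < t) (hlam : 0 ≤ lam) (hmu : 0 ≤ mu)
    (f : EuclideanSpace ℝ (Fin d) → ℝ)
    (hf : ∀ β, f β = 1 / (2 * t) * ‖β - z‖ ^ 2 + lam * ∑ i, |β i| + mu * ‖β‖)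
    (soft : EuclideanSpace ℝ (Fin d))
    (hsoft : ∀ i, soft i = Real.sign (z i) * max (|z i| - t * lam) 0) :
    (∀ β, f 0 ≤ f β) ↔ ‖soft‖ ≤ t * mu := by
  have hc : 0 ≤ t * lam := mul_nonneg ht.le hlam
  have habs : ∀ i, |soft i| = max (|z i| - t * lam) 0 := fun i => by
    rw [hsoft i]; exact soft_abs _ _ hc
  have hmul : ∀ i, soft i * z i = soft i ^ 2 + (t * lam) * |soft i| := fun i => by
    rw [hsoft i]; exact soft_mul (z i) _ hc
  have hres : ∀ i, |z i - soft i| ≤ t * lam := fun i => by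
    rw [hsoft i]; exact soft_residual _ _ hc
  have hnormsq : ∀ x : EuclideanSpace ℝ (Fin d), ‖x‖ ^ 2 = ∑ i, x i ^ 2 := fun x => by
    rw [EuclideanSpace.norm_eq, Real.sq_sqrt (by positivity)]
    simp [Real.norm_eq_abs, sq_abs]
  have hinnerdef : ∀ x y : EuclideanSpace ℝ (Fin d), ⟪x, y⟫ = ∑ i, x i * y i := fun x y => by
    rw [PiLp.inner_apply]; simp [RCLike.inner_apply]
    exact Finset.sum_congr rfl fun i _ => mul_comm _ _
  have hsubsq : ∀ x : EuclideanSpace ℝ (Fin d),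
      ‖x - z‖ ^ 2 = ‖x‖ ^ 2 - 2 * ⟪x, z⟫ + ‖z‖ ^ 2 := fun x => by
    rw [norm_sub_sq_real]
  have hL1 : (0:ℝ) ≤ ∑ i, |soft i| := Finset.sum_nonneg fun i _ => abs_nonneg _
  have hinner_soft : ⟪soft, z⟫ = ‖soft‖ ^ 2 + (t * lam) * ∑ i, |soft i| := by
    rw [hinnerdef, hnormsq, Finset.mul_sum, ← Finset.sum_add_distrib]
    exact Finset.sum_congr rfl fun i _ => hmul i
  have hf0 : f 0 = 1 / (2 * t) * ‖z‖ ^ 2 := by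
    rw [hf 0]
    simp [norm_neg]
  constructor
  · intro h
    by_contra hgt
    push_neg at hgt
    have hSpos : 0 < ‖soft‖ := lt_of_le_of_lt (by positivity) hgt
    set ε : ℝ := (‖soft‖ - t * mu) / ‖soft‖ with hεdef
    have hε : 0 < ε := div_pos (by linarith) hSpos
    have key := h (ε • soft)
    rw [hf0, hf] at key
    have e1 : ∑ i, |(ε • soft) i| = ε * ∑ i, |soft i| := by
      rw [Finset.mul_sum]
      exact Finset.sum_congr rfl fun i _ => by
        simp [PiLp.smul_apply, abs_mul, abs_of_pos hε, smul_eq_mul]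
    have e2 : ‖ε • soft‖ = ε * ‖soft‖ := by
      rw [norm_smul, Real.norm_eq_abs, abs_of_pos hε]
    have e3 : ‖ε • soft - z‖ ^ 2 = ε^2 * ‖soft‖^2 - 2 * (ε * ⟪soft, z⟫) + ‖z‖^2 := by
      rw [hsubsq, real_inner_smul_left, norm_smul, Real.norm_eq_abs, abs_of_pos hε,
        mul_pow]
    rw [e1, e2, e3, hinner_soft] at key
    have hεS : ε * ‖soft‖ = ‖soft‖ - t * mu := by
      rw [hεdef, div_mul_cancel₀ _ hSpos.ne']
    have e4 : ε^2 * ‖soft‖^2 = (‖soft‖ - t*mu)^2 := by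
      rw [← mul_pow, hεS]
    have e5 : ε * ‖soft‖^2 = (‖soft‖ - t*mu) * ‖soft‖ := by
      rw [sq, ← mul_assoc, hεS]
    have hmain : (ε^2 * ‖soft‖^2 - 2 * (ε * (‖soft‖ ^ 2 + t * lam * ∑ i, |soft i|)) + ‖z‖^2)
        + 2*t*(lam * (ε * ∑ i, |soft i|) + mu * (ε * ‖soft‖)) < ‖z‖^2 + 2*t*0 := by
      nlinarith [e4, e5, hεS, hgt, mul_pos (sub_pos.mpr hgt) (sub_pos.mpr hgt)]
    have := aux_div_lt t _ _ _ _ ht hmain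
    linarith
  · intro hS β
    rw [hf0, hf]
    have hβ1 : (0:ℝ) ≤ ∑ i, |β i| := Finset.sum_nonneg fun i _ => abs_nonneg _
    have hβz : ⟪β, z⟫ ≤ (t * lam) * ∑ i, |β i| + ‖β‖ * ‖soft‖ := by
      have hsplit : ⟪β, z⟫ = (∑ i, β i * (z i - soft i)) + ⟪β, soft⟫ := by
        rw [hinnerdef, hinnerdef, ← Finset.sum_add_distrib]
        exact Finset.sum_congr rfl fun i _ => by ring
      rw [hsplit]
      have h1 : (∑ i, β i * (z i - soft i)) ≤ (t * lam) * ∑ i, |β i| := by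
        rw [Finset.mul_sum]
        refine Finset.sum_le_sum fun i _ => ?_
        calc β i * (z i - soft i) ≤ |β i * (z i - soft i)| := le_abs_self _
          _ = |β i| * |z i - soft i| := abs_mul _ _
          _ ≤ |β i| * (t * lam) := mul_le_mul_of_nonneg_left (hres i) (abs_nonneg _)
          _ = t * lam * |β i| := by ring
      have h2 : ⟪β, soft⟫ ≤ ‖β‖ * ‖soft‖ := real_inner_le_norm _ _
      linarith
    have hβS : ‖β‖ * ‖soft‖ ≤ ‖β‖ * (t * mu) :=
      mul_le_mul_of_nonneg_left hS (norm_nonneg _)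
    have hsq := hsubsq β
    have hβn : (0:ℝ) ≤ ‖β‖ := norm_nonneg _
    have hmain : ‖z‖^2 + 2*t*0 ≤ ‖β - z‖^2 + 2*t*(lam * ∑ i, |β i| + mu * ‖β‖) := by
      nlinarith [sq_nonneg ‖β‖]
    have := aux_div_le t _ _ _ _ ht hmain
    linarith
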